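/- Let A_{k+1} = { (t_1, …, t_{2k+2}) ∈ (ℝ_{≥0})^{2k+2} : t_2 ≤ t_4 ≤ … ≤ t_{2k+2} and t_{2s-1} ≤ t_{2s} for all 1 ≤ s ≤ k+1 }. Then ∫_{A_{k+1}} e^{-t_{2k+2}} dt_1 … dt_{2k+2} ≤ (4(k+1))^{k+1}. -/

import Mathlib

open MeasureTheory Set Filter Real
open scoped ENNReal NNReal Topology

namespace Stmt3Aux

lemma lt_aux1 (m s : ℕ) (h : 2 * s + 3 < 2 * m + 2) : 2 * s + 1 < 2 * m + 2 := by omega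

lemma lt_aux2 (m s : ℕ) (h : 2 * s + 1 < 2 * m + 2) : 2 * s < 2 * m + 2 := by omega

lemma lt_aux3 (m : ℕ) : 2 * m + 1 < 2 * m + 2 := by omega

/-- The region predicate: `m+1` consecutive pairs, with the extra constraint that the
first "even" coordinate (index 1) is at least `a`. -/
def Pred (m : ℕ) (a : ℝ) (t : Fin (2 * m + 2) → ℝ) : Prop :=
  (∀ i, 0 ≤ t i) ∧
  (∀ s : ℕ, (h : 2 * s + 3 < 2 * m + 2) → t ⟨2 * s + 1, lt_aux1 m s h⟩ ≤ t ⟨2 * s + 3, h⟩) ∧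
  (∀ s : ℕ, (h : 2 * s + 1 < 2 * m + 2) → t ⟨2 * s, lt_aux2 m s h⟩ ≤ t ⟨2 * s + 1, h⟩) ∧
  a ≤ t ⟨1, by omega⟩

noncomputable def B (m : ℕ) (a : ℝ) (t : Fin (2 * m + 2) → ℝ) : ℝ≥0∞ :=
  ({t : Fin (2 * m + 2) → ℝ | Pred m a t}).indicator
    (fun t => ENNReal.ofReal (Real.exp (-(t ⟨2 * m + 1, lt_aux3 m⟩)))) t

noncomputable def F (m : ℕ) (a : ℝ) : ℝ≥0∞ := ∫⁻ t : Fin (2 * m + 2) → ℝ, B m a t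

noncomputable def chi (a x u : ℝ) : ℝ≥0∞ :=
  (Icc (0 : ℝ) u).indicator 1 x * (Ici a).indicator 1 u

lemma app_congr {N : ℕ} (t : Fin N → ℝ) {i j : ℕ} {hi : i < N} {hj : j < N} (h : i = j) :
    t ⟨i, hi⟩ = t ⟨j, hj⟩ := by subst h; rfl

lemma fin_eq {N : ℕ} {i j : Fin N} (h : (i : ℕ) = (j : ℕ)) : i = j := Fin.ext h

lemma piFinSuccAbove_zero_apply {N : ℕ} (t : Fin (N + 1) → ℝ) :
    (MeasurableEquiv.piFinSuccAbove (fun _ : Fin (N + 1) => ℝ) 0) t =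
      (t 0, fun j : Fin N => t j.succ) := rfl

/-! ### Measurability -/

lemma measurableSet_pred (m : ℕ) :
    MeasurableSet {p : ℝ × (Fin (2 * m + 2) → ℝ) | Pred m p.1 p.2} := by
  have h1 : MeasurableSet {p : ℝ × (Fin (2 * m + 2) → ℝ) | ∀ i, 0 ≤ p.2 i} := by
    rw [setOf_forall]
    exact MeasurableSet.iInter fun i =>
      measurableSet_le measurable_const (by fun_prop)
  have h2 : MeasurableSet {p : ℝ × (Fin (2 * m + 2) → ℝ) |
      ∀ s : ℕ, (h : 2 * s + 3 < 2 * m + 2) → p.2 ⟨2 * s + 1, by omega⟩ ≤ p.2 ⟨2 * s + 3, h⟩} := by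
    rw [setOf_forall]
    refine MeasurableSet.iInter fun s => ?_
    by_cases h : 2 * s + 3 < 2 * m + 2
    · have : {p : ℝ × (Fin (2 * m + 2) → ℝ) |
          (h : 2 * s + 3 < 2 * m + 2) → p.2 ⟨2 * s + 1, by omega⟩ ≤ p.2 ⟨2 * s + 3, h⟩} =
          {p | p.2 ⟨2 * s + 1, by omega⟩ ≤ p.2 ⟨2 * s + 3, h⟩} := by
        ext p; exact ⟨fun f => f h, fun x _ => x⟩
      rw [this]
      exact measurableSet_le (by fun_prop) (by fun_prop)
    · have : {p : ℝ × (Fin (2 * m + 2) → ℝ) |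
          (h : 2 * s + 3 < 2 * m + 2) → p.2 ⟨2 * s + 1, by omega⟩ ≤ p.2 ⟨2 * s + 3, h⟩} =
          univ := by
        ext p; simp only [mem_univ, iff_true, mem_setOf_eq]
        exact fun hh => absurd hh h
      rw [this]; exact MeasurableSet.univ
  have h3 : MeasurableSet {p : ℝ × (Fin (2 * m + 2) → ℝ) |
      ∀ s : ℕ, (h : 2 * s + 1 < 2 * m + 2) → p.2 ⟨2 * s, by omega⟩ ≤ p.2 ⟨2 * s + 1, h⟩} := by
    rw [setOf_forall]
    refine MeasurableSet.iInter fun s => ?_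
    by_cases h : 2 * s + 1 < 2 * m + 2
    · have : {p : ℝ × (Fin (2 * m + 2) → ℝ) |
          (h : 2 * s + 1 < 2 * m + 2) → p.2 ⟨2 * s, by omega⟩ ≤ p.2 ⟨2 * s + 1, h⟩} =
          {p | p.2 ⟨2 * s, by omega⟩ ≤ p.2 ⟨2 * s + 1, h⟩} := by
        ext p; exact ⟨fun f => f h, fun x _ => x⟩
      rw [this]
      exact measurableSet_le (by fun_prop) (by fun_prop)
    · have : {p : ℝ × (Fin (2 * m + 2) → ℝ) |
          (h : 2 * s + 1 < 2 * m + 2) → p.2 ⟨2 * s, by omega⟩ ≤ p.2 ⟨2 * s + 1, h⟩} =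
          univ := by
        ext p; simp only [mem_univ, iff_true, mem_setOf_eq]
        exact fun hh => absurd hh h
      rw [this]; exact MeasurableSet.univ
  have h4 : MeasurableSet {p : ℝ × (Fin (2 * m + 2) → ℝ) | p.1 ≤ p.2 ⟨1, by omega⟩} :=
    measurableSet_le measurable_fst (by fun_prop)
  have heq : {p : ℝ × (Fin (2 * m + 2) → ℝ) | Pred m p.1 p.2} =
      {p : ℝ × (Fin (2 * m + 2) → ℝ) | ∀ i, 0 ≤ p.2 i} ∩
      ({p : ℝ × (Fin (2 * m + 2) → ℝ) |
        ∀ s : ℕ, (h : 2 * s + 3 < 2 * m + 2) → p.2 ⟨2 * s + 1, by omega⟩ ≤ p.2 ⟨2 * s + 3, h⟩} ∩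
      ({p : ℝ × (Fin (2 * m + 2) → ℝ) |
        ∀ s : ℕ, (h : 2 * s + 1 < 2 * m + 2) → p.2 ⟨2 * s, by omega⟩ ≤ p.2 ⟨2 * s + 1, h⟩} ∩
       {p : ℝ × (Fin (2 * m + 2) → ℝ) | p.1 ≤ p.2 ⟨1, by omega⟩})) := by
    ext p
    simp only [Pred, mem_setOf_eq, mem_inter_iff]
  rw [heq]
  exact h1.inter (h2.inter (h3.inter h4))

lemma measurable_B (m : ℕ) : Measurable fun p : ℝ × (Fin (2 * m + 2) → ℝ) => B m p.1 p.2 := by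
  have : (fun p : ℝ × (Fin (2 * m + 2) → ℝ) => B m p.1 p.2) =
      ({p : ℝ × (Fin (2 * m + 2) → ℝ) | Pred m p.1 p.2}).indicator
        (fun p => ENNReal.ofReal (Real.exp (-(p.2 ⟨2 * m + 1, by omega⟩)))) := by
    funext p
    rfl
  rw [this]
  exact Measurable.indicator
    (ENNReal.measurable_ofReal.comp (Real.continuous_exp.measurable.comp
      (measurable_neg.comp ((measurable_pi_apply _).comp measurable_snd))))
    (measurableSet_pred m)

lemma measurable_F (m : ℕ) : Measurable (F m) :=
  (measurable_B m).lintegral_prod_right'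

lemma measurable_chi (a : ℝ) : Measurable fun p : ℝ × ℝ => chi a p.1 p.2 := by
  have : (fun p : ℝ × ℝ => chi a p.1 p.2) =
      fun p : ℝ × ℝ => ({p : ℝ × ℝ | 0 ≤ p.1 ∧ p.1 ≤ p.2}).indicator 1 p *
        ({p : ℝ × ℝ | a ≤ p.2}).indicator 1 p := by
    funext p
    simp only [chi, Set.indicator_apply, mem_setOf_eq, mem_Icc, mem_Ici, Pi.one_apply]
  rw [this]
  exact (measurable_const.indicator
      ((measurableSet_le measurable_const measurable_fst).inter
        (measurableSet_le measurable_fst measurable_snd))).mul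
    (measurable_const.indicator (measurableSet_le measurable_const measurable_snd))

/-! ### The structural decomposition -/

lemma pred_succ_iff (m : ℕ) (a : ℝ) (t : Fin (2 * (m + 1) + 2) → ℝ) :
    Pred (m + 1) a t ↔
      ((t ⟨0, by omega⟩ ∈ Icc (0 : ℝ) (t ⟨1, by omega⟩)) ∧ t ⟨1, by omega⟩ ∈ Ici a) ∧
      Pred m (t ⟨1, by omega⟩) (fun j : Fin (2 * m + 2) => t ⟨(j : ℕ) + 2, by omega⟩) := by
  constructor
  · rintro ⟨h0, h1, h2, h3⟩
    refine ⟨⟨⟨h0 _, ?_⟩, h3⟩, fun j => h0 _, fun s h => ?_, fun s h => ?_, ?_⟩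
    · have := h2 0 (by omega)
      exact le_of_le_of_eq (le_of_eq_of_le (app_congr t (by omega)).symm this) rfl
    · exact h1 (s + 1) (by omega)
    · exact h2 (s + 1) (by omega)
    · exact h1 0 (by omega)
  · rintro ⟨⟨⟨hx0, hxu⟩, hau⟩, hw0, hw1, hw2, hw3⟩
    refine ⟨?_, fun s h => ?_, fun s h => ?_, hau⟩
    · rintro ⟨v, hv⟩
      match v, hv with
      | 0, hv => exact hx0
      | 1, hv => exact le_trans hx0 hxu
      | (v + 2), hv => exact hw0 ⟨v, by omega⟩
    · match s, h with
      | 0, h => exact hw3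
      | (s + 1), h => exact hw1 s (by omega)
    · match s, h with
      | 0, h => exact hxu
      | (s + 1), h => exact hw2 s (by omega)

lemma B_succ (m : ℕ) (a : ℝ) (t : Fin (2 * (m + 1) + 2) → ℝ) :
    B (m + 1) a t = chi a (t ⟨0, by omega⟩) (t ⟨1, by omega⟩) *
      B m (t ⟨1, by omega⟩) (fun j : Fin (2 * m + 2) => t ⟨(j : ℕ) + 2, by omega⟩) := by
  by_cases h : Pred (m + 1) a t
  · obtain ⟨⟨hIcc, hIci⟩, hPred⟩ := (pred_succ_iff m a t).1 h
    simp only [B, chi, Set.indicator_of_mem (show t ∈ {t | Pred (m + 1) a t} from h),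
      Set.indicator_of_mem hIcc, Set.indicator_of_mem hIci,
      Set.indicator_of_mem (show _ ∈ {w | Pred m _ w} from hPred), Pi.one_apply, one_mul]
    rfl
  · simp only [B, chi, Set.indicator_of_notMem (show t ∉ {t | Pred (m + 1) a t} from h)]
    rw [pred_succ_iff m a t] at h
    by_cases hIcc : t ⟨0, by omega⟩ ∈ Icc (0 : ℝ) (t ⟨1, by omega⟩)
    · by_cases hIci : t ⟨1, by omega⟩ ∈ Ici a
      · have hP : (fun j : Fin (2 * m + 2) => t ⟨(j : ℕ) + 2, by omega⟩) ∉
            {w : Fin (2 * m + 2) → ℝ | Pred m (t ⟨1, by omega⟩) w} := fun hp =>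
          h ⟨⟨hIcc, hIci⟩, hp⟩
        rw [Set.indicator_of_notMem hP, mul_zero]
      · rw [Set.indicator_of_notMem hIci, mul_zero, zero_mul]
    · rw [Set.indicator_of_notMem hIcc, zero_mul, zero_mul]

lemma pred_zero_iff (a : ℝ) (t : Fin (2 * 0 + 2) → ℝ) :
    Pred 0 a t ↔ (t ⟨0, by omega⟩ ∈ Icc (0 : ℝ) (t ⟨1, by omega⟩)) ∧ t ⟨1, by omega⟩ ∈ Ici a := by
  constructor
  · rintro ⟨h0, h1, h2, h3⟩
    exact ⟨⟨h0 _, h2 0 (by omega)⟩, h3⟩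
  · rintro ⟨⟨hx0, hxu⟩, hau⟩
    refine ⟨?_, fun s h => by omega, fun s h => ?_, hau⟩
    · rintro ⟨v, hv⟩
      match v, hv with
      | 0, hv => exact hx0
      | 1, hv => exact le_trans hx0 hxu
    · match s, h with
      | 0, h => exact hxu
  
lemma B_zero (a : ℝ) (t : Fin (2 * 0 + 2) → ℝ) :
    B 0 a t = chi a (t ⟨0, by omega⟩) (t ⟨1, by omega⟩) *
      ENNReal.ofReal (Real.exp (-(t ⟨1, by omega⟩))) := by
  by_cases h : Pred 0 a t
  · obtain ⟨hIcc, hIci⟩ := (pred_zero_iff a t).1 h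
    simp only [B, chi, Set.indicator_of_mem (show t ∈ {t | Pred 0 a t} from h),
      Set.indicator_of_mem hIcc, Set.indicator_of_mem hIci, Pi.one_apply, one_mul]
  · simp only [B, chi, Set.indicator_of_notMem (show t ∉ {t | Pred 0 a t} from h)]
    rw [pred_zero_iff a t] at h
    by_cases hIcc : t ⟨0, by omega⟩ ∈ Icc (0 : ℝ) (t ⟨1, by omega⟩)
    · have hI : t ⟨1, by omega⟩ ∉ Ici a := fun hi => h ⟨hIcc, hi⟩
      rw [Set.indicator_of_notMem hI, mul_zero, zero_mul]
    · rw [Set.indicator_of_notMem hIcc, zero_mul, zero_mul]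

lemma lintegral_chi (a u : ℝ) :
    ∫⁻ x : ℝ, chi a x u = ENNReal.ofReal u * (Ici a).indicator 1 u := by
  simp only [chi]
  rw [lintegral_mul_const _ (show Measurable ((Icc (0:ℝ) u).indicator
    (1 : ℝ → ℝ≥0∞)) from measurable_one.indicator measurableSet_Icc)]
  rw [lintegral_indicator_one measurableSet_Icc, Real.volume_Icc, sub_zero]

/-- The key recursion. -/
lemma F_succ (m : ℕ) (a : ℝ) :
    F (m + 1) a = ∫⁻ u : ℝ, (Ici a).indicator 1 u * (ENNReal.ofReal u * F m u) := by
  classical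
  -- G1 on ℝ × (Fin (2m+3) → ℝ)
  set G1 : ℝ × (Fin (2 * m + 3) → ℝ) → ℝ≥0∞ := fun p =>
    chi a p.1 (p.2 ⟨0, by omega⟩) *
      B m (p.2 ⟨0, by omega⟩) (fun j : Fin (2 * m + 2) => p.2 ⟨(j : ℕ) + 1, by omega⟩)
    with hG1
  have mG1 : Measurable G1 := by
    apply Measurable.mul
    · exact (measurable_chi a).comp
        (measurable_fst.prodMk ((measurable_pi_apply _).comp measurable_snd))
    · exact (measurable_B m).comp
        (((measurable_pi_apply _).comp measurable_snd).prodMk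
          (measurable_pi_lambda _ fun j => (measurable_pi_apply _).comp measurable_snd))
  set G2 : ℝ → ℝ × (Fin (2 * m + 2) → ℝ) → ℝ≥0∞ := fun x q =>
    chi a x q.1 * B m q.1 q.2 with hG2
  have mG2 : ∀ x, Measurable (G2 x) := fun x => by
    apply Measurable.mul
    · exact (measurable_chi a).comp (measurable_const.prodMk measurable_fst)
    · exact measurable_B m
  have step1 : F (m + 1) a = ∫⁻ p : ℝ × (Fin (2 * m + 3) → ℝ), G1 p := by
    rw [F, ← (volume_preserving_piFinSuccAbove (fun _ : Fin (2 * m + 3 + 1) => ℝ)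
      0).lintegral_comp mG1]
    refine lintegral_congr fun t => ?_
    rw [B_succ m a t, piFinSuccAbove_zero_apply]
    show chi a _ _ * B m _ _ = chi a (t 0) _ * B m _ _
    refine congrArg₂ (· * ·) (congrArg₂ (chi a) ?_ ?_) (congrArg₂ (B m) ?_ ?_)
    · exact congrArg t (fin_eq (by simp))
    · exact congrArg t (fin_eq (by simp))
    · exact congrArg t (fin_eq (by simp))
    · funext j
      exact congrArg t (fin_eq (by simp))
  have step2 : F (m + 1) a = ∫⁻ x : ℝ, ∫⁻ r : Fin (2 * m + 3) → ℝ, G1 (x, r) := by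
    rw [step1, Measure.volume_eq_prod, lintegral_prod _ mG1.aemeasurable]
  have step3 : ∀ x : ℝ, (∫⁻ r : Fin (2 * m + 3) → ℝ, G1 (x, r)) =
      ∫⁻ u : ℝ, chi a x u * F m u := by
    intro x
    have e2 : (∫⁻ r : Fin (2 * m + 3) → ℝ, G1 (x, r)) =
        ∫⁻ q : ℝ × (Fin (2 * m + 2) → ℝ), G2 x q := by
      rw [← (volume_preserving_piFinSuccAbove (fun _ : Fin (2 * m + 2 + 1) => ℝ)
        0).lintegral_comp (mG2 x)]
      refine lintegral_congr fun r => ?_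
      rw [piFinSuccAbove_zero_apply]
      show chi a x _ * B m _ _ = chi a x (r 0) * B m (r 0) _
      refine congrArg₂ (· * ·) (congrArg (chi a x) ?_) (congrArg₂ (B m) ?_ ?_)
      · exact congrArg r (fin_eq (by simp))
      · exact congrArg r (fin_eq (by simp))
      · funext j
        exact congrArg r (fin_eq (by simp))
    rw [e2, Measure.volume_eq_prod, lintegral_prod _ (mG2 x).aemeasurable]
    refine lintegral_congr fun u => ?_
    simp only [hG2]
    rw [lintegral_const_mul (chi a x u) (show Measurable
      (fun w : Fin (2 * m + 2) → ℝ => B m u w) from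
      (measurable_B m).comp (measurable_const.prodMk measurable_id))]
    rfl
  rw [step2]
  simp_rw [step3]
  rw [lintegral_lintegral_swap
    (((measurable_chi a).mul ((measurable_F m).comp measurable_snd)).aemeasurable)]
  refine lintegral_congr fun u => ?_
  rw [lintegral_mul_const (F m u) (show Measurable (fun x : ℝ => chi a x u) from
      (measurable_chi a).comp (measurable_id.prodMk measurable_const)),
    lintegral_chi a u]
  ring

lemma F_zero (a : ℝ) :
    F 0 a = ∫⁻ u : ℝ, (Ici a).indicator 1 u *
      (ENNReal.ofReal u * ENNReal.ofReal (Real.exp (-u))) := by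
  classical
  set G : ℝ × ℝ → ℝ≥0∞ := fun p => chi a p.1 p.2 * ENNReal.ofReal (Real.exp (-p.2)) with hG
  have mG : Measurable G :=
    (measurable_chi a).mul (ENNReal.measurable_ofReal.comp
      (Real.continuous_exp.measurable.comp (measurable_neg.comp measurable_snd)))
  have step1 : F 0 a = ∫⁻ p : ℝ × ℝ, G p := by
    rw [F, ← (volume_preserving_finTwoArrow ℝ).lintegral_comp mG]
    refine lintegral_congr fun t => ?_
    rw [B_zero a t]
    show chi a _ _ * ENNReal.ofReal (Real.exp (-(t ⟨1, by omega⟩))) = _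
    have e2 : (MeasurableEquiv.finTwoArrow t : ℝ × ℝ) = (t 0, t 1) := by
      simp [MeasurableEquiv.finTwoArrow]
    rw [e2]
    refine congrArg₂ (· * ·) (congrArg₂ (chi a) ?_ ?_)
      (congrArg (fun z => ENNReal.ofReal (Real.exp (-z))) ?_)
    · exact congrArg t (fin_eq (by simp))
    · exact congrArg t (fin_eq (by simp))
    · exact congrArg t (fin_eq (by simp))
  rw [step1, Measure.volume_eq_prod, lintegral_prod _ mG.aemeasurable]
  rw [lintegral_lintegral_swap (by exact mG.aemeasurable)]
  refine lintegral_congr fun u => ?_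
  simp only [hG]
  rw [lintegral_mul_const (ENNReal.ofReal (Real.exp (-u)))
      (show Measurable (fun x : ℝ => chi a x u) from
      (measurable_chi a).comp (measurable_id.prodMk measurable_const)),
    lintegral_chi a u]
  ring

/-! ### One-dimensional analysis -/

lemma ftc (b : ℝ) (p : ℕ) (hb : (p : ℝ) + 1 ≤ b) (a : ℝ) (ha : 0 ≤ a) :
    IntegrableOn (fun u => (u + b) ^ p * (u + b - (p + 1)) * Real.exp (-u)) (Ioi a) ∧
    ∫ u in Ioi a, (u + b) ^ p * (u + b - (p + 1)) * Real.exp (-u) =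
      (a + b) ^ (p + 1) * Real.exp (-a) := by
  set g : ℝ → ℝ := fun u => -((u + b) ^ (p + 1) * Real.exp (-u)) with hg
  have hderiv : ∀ u : ℝ, HasDerivAt g ((u + b) ^ p * (u + b - (p + 1)) * Real.exp (-u)) u := by
    intro u
    have h1 : HasDerivAt (fun u : ℝ => (u + b) ^ (p + 1)) (((p : ℝ) + 1) * (u + b) ^ p) u := by
      have := ((hasDerivAt_id u).add_const b).pow (p + 1)
      simp at this; exact this
    have h2 : HasDerivAt (fun u : ℝ => Real.exp (-u)) (-Real.exp (-u)) u := by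
      simpa using ((hasDerivAt_id u).neg).exp
    have h3 := (h1.mul h2).neg
    refine h3.congr_deriv ?_
    ring
  have hpos : ∀ u ∈ Ioi a, 0 ≤ (u + b) ^ p * (u + b - (p + 1)) * Real.exp (-u) := by
    intro u hu
    have hua : a < u := hu
    have h1 : (0 : ℝ) ≤ u + b := by nlinarith [Nat.cast_nonneg (α := ℝ) p]
    have h2 : (0 : ℝ) ≤ u + b - (p + 1) := by nlinarith
    exact mul_nonneg (mul_nonneg (pow_nonneg h1 p) h2) (Real.exp_pos _).le
  have hlim : Tendsto g atTop (𝓝 0) := by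
    have h0 := tendsto_pow_mul_exp_neg_atTop_nhds_zero (p + 1)
    have h1 : Tendsto (fun u : ℝ => (u + b) ^ (p + 1) * Real.exp (-(u + b))) atTop (𝓝 0) :=
      h0.comp (tendsto_atTop_add_const_right _ b tendsto_id)
    have h2 := h1.mul_const (Real.exp b)
    rw [zero_mul] at h2
    have h3 : (fun u : ℝ => (u + b) ^ (p + 1) * Real.exp (-(u + b)) * Real.exp b) =
        fun u : ℝ => (u + b) ^ (p + 1) * Real.exp (-u) := by
      funext u
      rw [mul_assoc, ← Real.exp_add]
      ring_nf
    rw [h3] at h2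
    have h4 := h2.neg
    rw [neg_zero] at h4
    exact h4
  have hcont : ContinuousWithinAt g (Ici a) a := (hderiv a).continuousAt.continuousWithinAt
  refine ⟨integrableOn_Ioi_deriv_of_nonneg hcont (fun u _ => hderiv u) hpos hlim, ?_⟩
  rw [integral_Ioi_of_hasDerivAt_of_nonneg hcont (fun u _ => hderiv u) hpos hlim]
  simp only [hg, zero_sub, neg_neg]

/-- The sequence of constants. -/
noncomputable def c (n : ℕ) : ℝ := 11 / (8 * 11 ^ n * Nat.factorial n)

lemma c_pos (n : ℕ) : 0 < c n := by
  have : (0 : ℝ) < Nat.factorial n := by exact_mod_cast Nat.factorial_pos n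
  unfold c
  positivity

lemma c_succ (n : ℕ) : c n = c (n + 1) * (11 * (n + 1)) := by
  unfold c
  rw [Nat.factorial_succ]
  push_cast
  have h1 : (0 : ℝ) < Nat.factorial n := by exact_mod_cast Nat.factorial_pos n
  have h2 : (0 : ℝ) < 11 ^ n := by positivity
  field_simp
  ring

lemma pointwise_ineq (m : ℕ) (u : ℝ) (hu : 0 ≤ u) :
    11 * ((m : ℝ) + 2) * (u * (u + 4 * ((m : ℝ) + 1)) ^ (2 * (m + 1))) ≤
      (u + 4 * ((m : ℝ) + 2)) ^ (2 * m + 3) *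
        (u + 4 * ((m : ℝ) + 2) - (((2 * m + 3 : ℕ) : ℝ) + 1)) := by
  have hn : (0 : ℝ) ≤ m := Nat.cast_nonneg m
  have h1 : (u + 4 * ((m : ℝ) + 1)) ^ (2 * (m + 1)) ≤
      (u + 4 * ((m : ℝ) + 2)) ^ (2 * (m + 1)) := by
    apply pow_le_pow_left₀ (by linarith) (by linarith)
  have h2 : 11 * ((m : ℝ) + 2) * u ≤ (u + 4 * ((m : ℝ) + 2)) * (u + 2 * ((m : ℝ) + 2)) := by
    nlinarith [sq_nonneg (2 * u - 5 * ((m : ℝ) + 2)), sq_nonneg ((m : ℝ) + 2)]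
  have h3 : (0 : ℝ) ≤ u + 4 * ((m : ℝ) + 2) := by linarith
  have e1 : (u + 4 * ((m : ℝ) + 2)) ^ (2 * m + 3) =
      (u + 4 * ((m : ℝ) + 2)) ^ (2 * (m + 1)) * (u + 4 * ((m : ℝ) + 2)) := by
    rw [show 2 * m + 3 = 2 * (m + 1) + 1 from by omega, pow_succ]
  calc 11 * ((m : ℝ) + 2) * (u * (u + 4 * ((m : ℝ) + 1)) ^ (2 * (m + 1)))
      = (11 * ((m : ℝ) + 2) * u) * (u + 4 * ((m : ℝ) + 1)) ^ (2 * (m + 1)) := by ring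
    _ ≤ ((u + 4 * ((m : ℝ) + 2)) * (u + 2 * ((m : ℝ) + 2))) *
        (u + 4 * ((m : ℝ) + 2)) ^ (2 * (m + 1)) := by
        apply mul_le_mul h2 h1 (pow_nonneg (by linarith) _)
        positivity
    _ = (u + 4 * ((m : ℝ) + 2)) ^ (2 * m + 3) *
        (u + 4 * ((m : ℝ) + 2) - (((2 * m + 3 : ℕ) : ℝ) + 1)) := by
        rw [e1]
        push_cast
        ring

/-! ### The main bound by induction -/

lemma indicator_form_eq (a : ℝ) (g : ℝ → ℝ≥0∞) :
    (∫⁻ u : ℝ, (Ici a).indicator 1 u * g u) = ∫⁻ u in Ioi a, g u := by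
  have h : (fun u : ℝ => (Ici a).indicator 1 u * g u) = (Ici a).indicator g := by
    funext u
    by_cases hu : u ∈ Ici a
    · simp [Set.indicator_of_mem hu]
    · simp [Set.indicator_of_notMem hu]
  rw [h, lintegral_indicator measurableSet_Ici]
  exact setLIntegral_congr (Ioi_ae_eq_Ici (μ := volume) (a := a)).symm

lemma F_le (m : ℕ) : ∀ a : ℝ, 0 ≤ a →
    F m a ≤ ENNReal.ofReal (c (m + 1) * (a + 4 * (m + 1)) ^ (2 * (m + 1)) * Real.exp (-a)) := by
  induction m with
  | zero =>
    intro a ha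
    rw [F_zero, indicator_form_eq]
    have key : (∫⁻ u in Ioi a, ENNReal.ofReal u * ENNReal.ofReal (Real.exp (-u))) =
        ∫⁻ u in Ioi a, ENNReal.ofReal ((u + 1) ^ 0 * (u + 1 - (((0:ℕ):ℝ) + 1)) *
          Real.exp (-u)) := by
      refine setLIntegral_congr_fun measurableSet_Ioi (fun u hu => ?_)
      rw [← ENNReal.ofReal_mul (le_of_lt (lt_of_le_of_lt ha hu))]
      congr 1
      push_cast
      ring
    rw [key]
    obtain ⟨hint, heq⟩ := ftc 1 0 (by norm_num) a ha
    rw [← ofReal_integral_eq_lintegral_ofReal hint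
      ((ae_restrict_iff' measurableSet_Ioi).2 (ae_of_all _ fun u hu =>
        mul_nonneg (mul_nonneg (pow_nonneg (by have := mem_Ioi.1 hu; push_cast; linarith) _)
          (by have := mem_Ioi.1 hu; push_cast; linarith)) (Real.exp_pos _).le))]
    rw [heq]
    apply ENNReal.ofReal_le_ofReal
    have hc1 : c (0 + 1) = 1 / 8 := by norm_num [c]
    rw [hc1]
    have hexp : (0:ℝ) < Real.exp (-a) := Real.exp_pos _
    have h8 : (a + 1) ^ (0 + 1) ≤ 1 / 8 * (a + 4 * (((0:ℕ):ℝ) + 1)) ^ (2 * (0 + 1)) := by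
      push_cast
      nlinarith [sq_nonneg a]
    exact mul_le_mul_of_nonneg_right h8 hexp.le
  | succ m ih =>
    intro a ha
    rw [F_succ, indicator_form_eq]
    have hb : ((2 * m + 3 : ℕ) : ℝ) + 1 ≤ 4 * ((m : ℝ) + 2) := by push_cast; linarith
    obtain ⟨hint, heq⟩ := ftc (4 * ((m : ℝ) + 2)) (2 * m + 3) hb a ha
    calc (∫⁻ u in Ioi a, ENNReal.ofReal u * F m u)
        ≤ ∫⁻ u in Ioi a, ENNReal.ofReal (c (m + 2) *
            ((u + 4 * ((m : ℝ) + 2)) ^ (2 * m + 3) *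
              (u + 4 * ((m : ℝ) + 2) - (((2 * m + 3 : ℕ) : ℝ) + 1)) * Real.exp (-u))) := by
          refine setLIntegral_mono (by fun_prop) fun u hu => ?_
          have hu0 : 0 ≤ u := le_trans ha (le_of_lt (mem_Ioi.1 hu))
          calc ENNReal.ofReal u * F m u
              ≤ ENNReal.ofReal u * ENNReal.ofReal (c (m + 1) *
                  (u + 4 * (m + 1)) ^ (2 * (m + 1)) * Real.exp (-u)) :=
                mul_le_mul_right (ih u hu0) _
            _ = ENNReal.ofReal (u * (c (m + 1) *
                  (u + 4 * (m + 1)) ^ (2 * (m + 1)) * Real.exp (-u))) := by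
                rw [← ENNReal.ofReal_mul hu0]
            _ ≤ _ := by
                apply ENNReal.ofReal_le_ofReal
                have hkey := pointwise_ineq m u hu0
                have hc := c_succ (m + 1)
                have hcpos := (c_pos (m + 2)).le
                have hexp := (Real.exp_pos (-u)).le
                have h5 := mul_le_mul_of_nonneg_left hkey (mul_nonneg hcpos hexp)
                have hc2 : c (m + 1) = c (m + 2) * (11 * ((m : ℝ) + 2)) := by
                  rw [hc]; push_cast; ring
                rw [hc2]
                nlinarith [h5]
    _ = ENNReal.ofReal (∫ u in Ioi a, c (m + 2) *
          ((u + 4 * ((m : ℝ) + 2)) ^ (2 * m + 3) *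
            (u + 4 * ((m : ℝ) + 2) - (((2 * m + 3 : ℕ) : ℝ) + 1)) * Real.exp (-u))) := by
          rw [← ofReal_integral_eq_lintegral_ofReal]
          · exact hint.const_mul _
          · refine (ae_restrict_iff' measurableSet_Ioi).2 (ae_of_all _ fun u hu => ?_)
            have hua : a < u := mem_Ioi.1 hu
            have hm : (0:ℝ) ≤ (m:ℝ) := Nat.cast_nonneg m
            have h1 : (0 : ℝ) ≤ u + 4 * ((m : ℝ) + 2) := by linarith
            have h2 : (0 : ℝ) ≤ u + 4 * ((m : ℝ) + 2) - (((2 * m + 3 : ℕ) : ℝ) + 1) := by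
              push_cast; linarith
            exact mul_nonneg (c_pos _).le (mul_nonneg (mul_nonneg (pow_nonneg h1 _) h2)
              (Real.exp_pos _).le)
    _ = ENNReal.ofReal (c (m + 1 + 1) * (a + 4 * (((m + 1 : ℕ) : ℝ) + 1)) ^ (2 * (m + 1 + 1)) *
          Real.exp (-a)) := by
          rw [integral_const_mul, heq]
          congr 1
          rw [show 2 * (m + 1 + 1) = (2 * m + 3) + 1 from by omega]
          push_cast
          ring

/-! ### Numerics -/

lemma pow_succ_le (M : ℕ) (hM : 1 ≤ M) : 4 * ((M : ℝ) + 1) ^ M ≤ 11 * (M : ℝ) ^ M := by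
  have hM0 : (0 : ℝ) < M := by exact_mod_cast hM
  have e1 : ((M : ℝ) + 1) = M * (1 + 1 / M) := by field_simp
  rw [e1, mul_pow]
  have e2 : (1 + 1 / (M : ℝ)) ^ M ≤ Real.exp 1 := by
    calc (1 + 1 / (M : ℝ)) ^ M ≤ (Real.exp (1 / M)) ^ M := by
          apply pow_le_pow_left₀ (by positivity)
          have := Real.add_one_le_exp (1 / (M : ℝ))
          linarith
      _ = Real.exp 1 := by
          rw [← Real.exp_nat_mul]
          congr 1
          field_simp
  have e3 : Real.exp 1 ≤ 11 / 4 := le_of_lt (lt_of_lt_of_le Real.exp_one_lt_d9 (by norm_num))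
  have e4 : (0 : ℝ) ≤ (M : ℝ) ^ M := pow_nonneg hM0.le M
  nlinarith [mul_le_mul_of_nonneg_left (e2.trans e3) e4]

lemma fact_lb : ∀ n : ℕ, 11 * (4 * ((n : ℝ) + 1)) ^ (n + 1) ≤ 8 * 11 ^ (n + 1) * Nat.factorial (n + 1) := by
  intro n
  induction n with
  | zero => norm_num
  | succ n ih =>
    push_cast
    have key := pow_succ_le (n + 1) (by omega)
    push_cast at key
    have h1 : (4 * ((n : ℝ) + 1 + 1)) ^ (n + 1 + 1) ≤
        11 * ((n : ℝ) + 1 + 1) * (4 * ((n : ℝ) + 1)) ^ (n + 1) := by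
      have e1 : (4 * ((n : ℝ) + 1 + 1)) ^ (n + 1 + 1) =
          4 * ((n : ℝ) + 1 + 1) * (4 ^ (n + 1) * ((n : ℝ) + 1 + 1) ^ (n + 1)) := by
        rw [pow_succ, mul_pow]
        ring
      have e2 : (11 : ℝ) * ((n : ℝ) + 1 + 1) * (4 * ((n : ℝ) + 1)) ^ (n + 1) =
          ((n : ℝ) + 1 + 1) * (4 ^ (n + 1) * (11 * ((n : ℝ) + 1) ^ (n + 1))) := by
        rw [mul_pow]
        ring
      rw [e1, e2]
      have h4 : (0 : ℝ) ≤ 4 ^ (n + 1) := by positivity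
      have hn2 : (0 : ℝ) ≤ (n : ℝ) + 1 + 1 := by positivity
      have : (4 : ℝ) * ((n : ℝ) + 1 + 1) ^ (n + 1) ≤ 11 * ((n : ℝ) + 1) ^ (n + 1) := by
        convert key using 3 <;> push_cast <;> ring
      nlinarith [mul_le_mul_of_nonneg_left this
        (show (0:ℝ) ≤ ((n:ℝ) + 1 + 1) * 4 ^ (n + 1) by positivity)]
    calc 11 * (4 * ((n : ℝ) + 1 + 1)) ^ (n + 1 + 1)
        ≤ 11 * (11 * ((n : ℝ) + 1 + 1) * (4 * ((n : ℝ) + 1)) ^ (n + 1)) := by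
          apply mul_le_mul_of_nonneg_left h1 (by norm_num)
      _ = (11 * ((n : ℝ) + 1 + 1)) * (11 * (4 * ((n : ℝ) + 1)) ^ (n + 1)) := by ring
      _ ≤ (11 * ((n : ℝ) + 1 + 1)) * (8 * 11 ^ (n + 1) * Nat.factorial (n + 1)) := by
          apply mul_le_mul_of_nonneg_left ih (by positivity)
      _ = 8 * 11 ^ (n + 1 + 1) * ((n + 1 + 1) * Nat.factorial (n + 1)) := by push_cast; ring
      _ = 8 * 11 ^ (n + 1 + 1) * (Nat.factorial (n + 1 + 1)) := by
          rw [Nat.factorial_succ (n + 1)]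
          push_cast
          ring

lemma numeric (k : ℕ) :
    c (k + 1) * (0 + 4 * ((k : ℝ) + 1)) ^ (2 * (k + 1)) * Real.exp (-0) ≤
      (4 * ((k : ℝ) + 1)) ^ (k + 1) := by
  rw [neg_zero, Real.exp_zero, mul_one, zero_add]
  have hfact := fact_lb k
  have hden : (0 : ℝ) < 8 * 11 ^ (k + 1) * Nat.factorial (k + 1) := by
    have : (0 : ℝ) < (Nat.factorial (k + 1) : ℝ) := by exact_mod_cast Nat.factorial_pos (k + 1)
    positivity
  have h1 : c (k + 1) * (4 * ((k : ℝ) + 1)) ^ (k + 1) ≤ 1 := by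
    unfold c
    rw [div_mul_eq_mul_div, div_le_one hden]
    push_cast
    push_cast at hfact
    linarith
  have h2 : (0 : ℝ) ≤ (4 * ((k : ℝ) + 1)) ^ (k + 1) := by positivity
  calc c (k + 1) * (4 * ((k : ℝ) + 1)) ^ (2 * (k + 1)) =
      (c (k + 1) * (4 * ((k : ℝ) + 1)) ^ (k + 1)) * (4 * ((k : ℝ) + 1)) ^ (k + 1) := by
        rw [two_mul, pow_add]
        ring
    _ ≤ 1 * (4 * ((k : ℝ) + 1)) ^ (k + 1) := mul_le_mul_of_nonneg_right h1 h2
    _ = (4 * ((k : ℝ) + 1)) ^ (k + 1) := one_mul _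

end Stmt3Aux

open Stmt3Aux

/-- The integral of `e^{-t_{2k+2}}` over the region
`A_{k+1} = { t ∈ ℝ₊^{2k+2} : t₂ ≤ t₄ ≤ … ≤ t_{2k+2}, t_{2s-1} ≤ t_{2s} }`
is at most `(4(k+1))^{k+1}`.  (Coordinates are indexed from 0 here, so the
`1`-based coordinate `t_j` is `t ⟨j-1⟩`.) -/
theorem stmt_3 (k : ℕ) :
    (∫ t in {t : Fin (2 * k + 2) → ℝ |
        (∀ i, 0 ≤ t i) ∧
        (∀ s : ℕ, (h : 2 * s + 3 < 2 * k + 2) →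
          t ⟨2 * s + 1, by omega⟩ ≤ t ⟨2 * s + 3, h⟩) ∧
        (∀ s : ℕ, (h : 2 * s + 1 < 2 * k + 2) →
          t ⟨2 * s, by omega⟩ ≤ t ⟨2 * s + 1, h⟩)},
      Real.exp (-(t ⟨2 * k + 1, by omega⟩))) ≤ (4 * (k + 1) : ℝ) ^ (k + 1) := by
  have hS : {t : Fin (2 * k + 2) → ℝ |
        (∀ i, 0 ≤ t i) ∧
        (∀ s : ℕ, (h : 2 * s + 3 < 2 * k + 2) →
          t ⟨2 * s + 1, by omega⟩ ≤ t ⟨2 * s + 3, h⟩) ∧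
        (∀ s : ℕ, (h : 2 * s + 1 < 2 * k + 2) →
          t ⟨2 * s, by omega⟩ ≤ t ⟨2 * s + 1, h⟩)} = {t | Pred k 0 t} := by
    ext t
    simp only [mem_setOf_eq, Pred]
    constructor
    · rintro ⟨h0, h1, h2⟩
      exact ⟨h0, h1, h2, h0 _⟩
    · rintro ⟨h0, h1, h2, _⟩
      exact ⟨h0, h1, h2⟩
  rw [hS]
  have hmeas : MeasurableSet {t : Fin (2 * k + 2) → ℝ | Pred k 0 t} := by
    have : {t : Fin (2 * k + 2) → ℝ | Pred k 0 t} =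
        (fun t : Fin (2 * k + 2) → ℝ => ((0 : ℝ), t)) ⁻¹'
          {p : ℝ × (Fin (2 * k + 2) → ℝ) | Pred k p.1 p.2} := rfl
    rw [this]
    exact (measurableSet_pred k).preimage (measurable_const.prodMk measurable_id)
  have hfm : AEStronglyMeasurable
      (fun t : Fin (2 * k + 2) → ℝ => Real.exp (-(t ⟨2 * k + 1, by omega⟩)))
      (volume.restrict {t : Fin (2 * k + 2) → ℝ | Pred k 0 t}) := by
    apply Continuous.aestronglyMeasurable
    exact Real.continuous_exp.comp (continuous_neg.comp (continuous_apply _))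
  rw [integral_eq_lintegral_of_nonneg_ae (ae_of_all _ fun t => (Real.exp_pos _).le) hfm]
  have hFk : (∫⁻ t in {t : Fin (2 * k + 2) → ℝ | Pred k 0 t},
      ENNReal.ofReal (Real.exp (-(t ⟨2 * k + 1, by omega⟩)))) = F k 0 := by
    rw [F]
    unfold B
    rw [lintegral_indicator hmeas]
  rw [hFk]
  refine ENNReal.toReal_le_of_le_ofReal (by positivity) ?_
  calc F k 0 ≤ ENNReal.ofReal (c (k + 1) * (0 + 4 * (k + 1)) ^ (2 * (k + 1)) *
      Real.exp (-0)) := F_le k 0 le_rfl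
    _ ≤ ENNReal.ofReal ((4 * (k + 1) : ℝ) ^ (k + 1)) := by
        apply ENNReal.ofReal_le_ofReal
        have := numeric k
        push_cast at this ⊢
        linarith
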